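/- Suppose D ∈ ℝ^{p×q} has full column rank q and B = AMD where M = (CᵀC)⁻¹Cᵀ and C has full column rank. Then for every z ∈ ℂ with z ≠ 0, the matrix [[zIₙ − A, −B], [C, D]] has rank n + q. In particular the system is minimum phase (rank n + q for all |z| ≥ 1). -/

import Mathlib

open Matrix

lemma aux_mulVecLin_inj {m k : ℕ} {K : Type*} [Field K]
    (A : Matrix (Fin m) (Fin k) K) (h : A.rank = k) :
    Function.Injective A.mulVecLin := by
  rw [← LinearMap.ker_eq_bot]
  have h1 := A.mulVecLin.finrank_range_add_finrank_ker
  rw [Module.finrank_fintype_fun_eq_card, Fintype.card_fin] at h1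
  have : Module.finrank K (LinearMap.ker A.mulVecLin) = 0 := by
    have : A.rank = Module.finrank K (LinearMap.range A.mulVecLin) := rfl
    omega
  exact Submodule.finrank_eq_zero.mp this

lemma aux_isUnit_transpose_mul_self {m k : ℕ}
    (A : Matrix (Fin m) (Fin k) ℝ) (h : A.rank = k) :
    IsUnit (Aᵀ * A) := by
  rw [← mulVec_injective_iff_isUnit]
  have hr : (Aᵀ * A).rank = k := by rw [A.rank_transpose_mul_self, h]
  exact aux_mulVecLin_inj _ hr

lemma aux_map_inj {m k : ℕ} (A : Matrix (Fin m) (Fin k) ℝ) (h : A.rank = k)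
    (u : Fin k → ℂ) (hu : (A.map Complex.ofReal).mulVec u = 0) : u = 0 := by
  have hU : IsUnit (Aᵀ * A) := aux_isUnit_transpose_mul_self A h
  have hU' : IsUnit ((Aᵀ * A).map Complex.ofReal) := by
    have h2 := hU.map (Complex.ofRealHom.mapMatrix (m := Fin k))
    have : (Complex.ofRealHom.mapMatrix (m := Fin k)) (Aᵀ * A) = (Aᵀ * A).map Complex.ofReal := rfl
    rwa [this] at h2
  have hmap : (Aᵀ * A).map Complex.ofReal
      = (Aᵀ.map Complex.ofReal) * (A.map Complex.ofReal) := by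
    exact Matrix.map_mul (L := Aᵀ) (M := A) (f := Complex.ofRealHom)
  have h2 : ((Aᵀ * A).map Complex.ofReal).mulVec u = 0 := by
    rw [hmap, ← mulVec_mulVec, hu, mulVec_zero]
  have hinj := mulVec_injective_iff_isUnit.mpr hU'
  have := hinj (a₁ := u) (a₂ := 0) (by simpa using h2)
  exact this

/-- Case (c): if `D` has full column rank `q`, `C` has full column rank, and
`B = AMD` with `M = (CᵀC)⁻¹Cᵀ`, then the Rosenbrock matrix
`[[zI − A, −B],[C, D]]` has rank `n + q` for every nonzero `z ∈ ℂ`;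
in particular the minimum phase condition (for `|z| ≥ 1`) holds. -/
theorem stmt_5 {n p q : ℕ}
    (A : Matrix (Fin n) (Fin n) ℝ) (B : Matrix (Fin n) (Fin q) ℝ)
    (C : Matrix (Fin p) (Fin n) ℝ) (D : Matrix (Fin p) (Fin q) ℝ)
    (hC : C.rank = n) (hD : D.rank = q)
    (M : Matrix (Fin n) (Fin p) ℝ) (hM : M = (Cᵀ * C)⁻¹ * Cᵀ)
    (hB : B = A * M * D) :
    (∀ z : ℂ, z ≠ 0 →
      (Matrix.fromBlocks
        (z • (1 : Matrix (Fin n) (Fin n) ℂ) - A.map (Complex.ofReal))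
        (-(B.map (Complex.ofReal)))
        (C.map (Complex.ofReal)) (D.map (Complex.ofReal))).rank = n + q) ∧
    (∀ z : ℂ, 1 ≤ ‖z‖ →
      (Matrix.fromBlocks
        (z • (1 : Matrix (Fin n) (Fin n) ℂ) - A.map (Complex.ofReal))
        (-(B.map (Complex.ofReal)))
        (C.map (Complex.ofReal)) (D.map (Complex.ofReal))).rank = n + q) := by
  -- M * C = 1 over ℝ
  have hCC : IsUnit (Cᵀ * C) := aux_isUnit_transpose_mul_self C hC
  have hMC : M * C = (1 : Matrix (Fin n) (Fin n) ℝ) := by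
    rw [hM, Matrix.mul_assoc]
    exact Matrix.nonsing_inv_mul _ ((Matrix.isUnit_iff_isUnit_det _).mp hCC)
  -- complex versions
  set A' := A.map Complex.ofReal with hA'
  set B' := B.map Complex.ofReal with hB'
  set C' := C.map Complex.ofReal with hC'
  set D' := D.map Complex.ofReal with hD'
  set M' := M.map Complex.ofReal with hM'
  have hmapmul : ∀ {a b c : ℕ} (X : Matrix (Fin a) (Fin b) ℝ)
      (Y : Matrix (Fin b) (Fin c) ℝ),
      (X * Y).map Complex.ofReal = X.map Complex.ofReal * Y.map Complex.ofReal := by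
    intro a b c X Y
    exact Matrix.map_mul (L := X) (M := Y) (f := Complex.ofRealHom)
  have hMC' : M' * C' = 1 := by
    rw [hM', hC', ← hmapmul]
    rw [hMC]
    simp [Matrix.map_one]
  have hB'' : B' = A' * M' * D' := by
    rw [hB', hB, hmapmul, hmapmul]
  have key : ∀ z : ℂ, z ≠ 0 →
      (Matrix.fromBlocks (z • (1 : Matrix (Fin n) (Fin n) ℂ) - A') (-B') C' D').rank
        = n + q := by
    intro z hz
    have hinj : Function.Injective
        (Matrix.fromBlocks (z • (1 : Matrix (Fin n) (Fin n) ℂ) - A') (-B') C' D').mulVecLin := by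
      rw [← LinearMap.ker_eq_bot]
      rw [LinearMap.ker_eq_bot']
      intro v hv
      simp only [mulVecLin_apply] at hv
      set x : Fin n → ℂ := v ∘ Sum.inl with hx
      set u : Fin q → ℂ := v ∘ Sum.inr with hu
      rw [show v = Sum.elim x u by ext (i | j) <;> rfl] at hv
      rw [Matrix.fromBlocks_mulVec] at hv
      have e1 : (z • (1 : Matrix (Fin n) (Fin n) ℂ) - A').mulVec x + (-B').mulVec u = 0 := by
        have := congrArg (fun f => f ∘ Sum.inl) hv
        ext i; exact congrFun this i
      have e2 : C'.mulVec x + D'.mulVec u = 0 := by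
        have := congrArg (fun f => f ∘ Sum.inr) hv
        ext i; exact congrFun this i
      -- apply M' to e2
      have e3 : x + (M' * D').mulVec u = 0 := by
        have := congrArg (M'.mulVec) e2
        rw [Matrix.mulVec_add, Matrix.mulVec_mulVec, Matrix.mulVec_mulVec, hMC',
          Matrix.one_mulVec, Matrix.mulVec_zero] at this
        exact this
      have hx0 : x = -((M' * D').mulVec u) := eq_neg_of_add_eq_zero_left e3
      -- substitute into e1
      have e4 : z • x = 0 := by
        have hAx : A'.mulVec x = -(B'.mulVec u) := by
          rw [hx0, Matrix.mulVec_neg, Matrix.mulVec_mulVec, hB'', Matrix.mul_assoc]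
        have : (z • (1 : Matrix (Fin n) (Fin n) ℂ)).mulVec x - A'.mulVec x
            - B'.mulVec u = 0 := by
          rw [Matrix.sub_mulVec, Matrix.neg_mulVec] at e1
          have := e1
          ext i
          have h := congrFun this i
          simpa [sub_eq_add_neg, Pi.add_apply, Pi.sub_apply] using h
        rw [hAx] at this
        have hsmul : (z • (1 : Matrix (Fin n) (Fin n) ℂ)).mulVec x = z • x := by
          rw [Matrix.smul_mulVec, Matrix.one_mulVec]
        rw [hsmul] at this
        ext i
        have h := congrFun this i
        simpa using h
      have hx00 : x = 0 := by
        ext i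
        have h := congrFun e4 i
        simp only [Pi.smul_apply, smul_eq_mul, Pi.zero_apply] at h
        rcases mul_eq_zero.mp h with h | h
        · exact absurd h hz
        · simpa using h
      have hDu : D'.mulVec u = 0 := by
        rw [hx00, Matrix.mulVec_zero, zero_add] at e2
        exact e2
      have hu0 : u = 0 := aux_map_inj D hD u hDu
      ext (i | j)
      · exact congrFun hx00 i
      · exact congrFun hu0 j
    have : (Matrix.fromBlocks (z • (1 : Matrix (Fin n) (Fin n) ℂ) - A') (-B') C' D').rank
        = Module.finrank ℂ ((Fin n ⊕ Fin q) → ℂ) := by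
      unfold Matrix.rank
      rw [LinearMap.finrank_range_of_inj hinj]
    rw [this, Module.finrank_fintype_fun_eq_card, Fintype.card_sum, Fintype.card_fin,
      Fintype.card_fin]
  refine ⟨key, fun z hz => key z ?_⟩
  intro h0
  rw [h0] at hz
  norm_num at hz
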